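/- (Iwasawa criterion) Let a group G act on a set X, and suppose given for every x ∈ X a subgroup T(x) of G such that: (i) each T(x) is commutative; (ii) T(g·x) = g T(x) g⁻¹ for every g ∈ G and x ∈ X; (iii) the subgroups T(x), for x ∈ X, generate G. If the action of G on X is quasiprimitive, then every normal subgroup N of G that acts nontrivially on X contains the commutator subgroup D(G) of G. -/

import Mathlib

/-- The Iwasawa criterion: if a group `G` acts quasiprimitively on `X` and admits an
equivariant family of commutative subgroups `T x` generating `G`, then every normal
subgroup of `G` acting nontrivially on `X` contains the commutator subgroup of `G`. -/
theorem iwasawa_criterion {G X : Type*} [Group G] [MulAction G X]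
    (T : X → Subgroup G)
    (hcomm : ∀ x : X, IsMulCommutative (T x))
    (hconj : ∀ (g : G) (x : X), T (g • x) = (T x).map (MulAut.conj g).toMonoidHom)
    (hgen : (⨆ x : X, T x) = ⊤)
    (hquasi : ∀ M : Subgroup G, M.Normal → (∃ m ∈ M, ∃ x : X, m • x ≠ x) →
      MulAction.IsPretransitive M X)
    (N : Subgroup G) (hN : N.Normal) (hNX : ∃ n ∈ N, ∃ x : X, n • x ≠ x) :
    commutator G ≤ N := by
  have htrans := hquasi N hN hNX
  obtain ⟨_, _, x₀, _⟩ := hNX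
  -- N ⊔ T x₀ = ⊤
  have hsup : T x₀ ⊔ N = ⊤ := by
    rw [eq_top_iff, ← hgen, iSup_le_iff]
    intro y
    obtain ⟨n, hn⟩ := htrans.exists_smul_eq x₀ y
    have hy : (n : G) • x₀ = y := hn
    rw [← hy, hconj]
    rintro g ⟨t, ht, rfl⟩
    have hn' : (n : G) ∈ T x₀ ⊔ N := Subgroup.mem_sup_right n.2
    have ht' : t ∈ T x₀ ⊔ N := Subgroup.mem_sup_left ht
    simpa using mul_mem (mul_mem hn' ht') (inv_mem hn')
  rw [commutator_def, Subgroup.commutator_le]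
  intro g₁ _ g₂ _
  have key : ∀ g : G, ∃ t ∈ T x₀, ∃ n ∈ N, g = t * n := by
    intro g
    have : g ∈ ((T x₀ ⊔ N : Subgroup G) : Set G) := by rw [hsup]; trivial
    rw [Subgroup.mul_normal] at this
    obtain ⟨t, ht, n, hn, rfl⟩ := this
    exact ⟨t, ht, n, hn, rfl⟩
  obtain ⟨t₁, ht₁, n₁, hn₁, rfl⟩ := key g₁
  obtain ⟨t₂, ht₂, n₂, hn₂, rfl⟩ := key g₂
  have hker : (QuotientGroup.mk' N).ker = N := QuotientGroup.ker_mk' N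
  rw [← hker, MonoidHom.mem_ker]
  have h1 : (QuotientGroup.mk' N) n₁ = 1 := by
    rw [← MonoidHom.mem_ker, hker]; exact hn₁
  have h2 : (QuotientGroup.mk' N) n₂ = 1 := by
    rw [← MonoidHom.mem_ker, hker]; exact hn₂
  have hcommute : t₁ * t₂ = t₂ * t₁ := by
    have := (hcomm x₀).is_comm.comm ⟨t₁, ht₁⟩ ⟨t₂, ht₂⟩
    exact congrArg Subtype.val this
  rw [commutatorElement_def]
  simp only [map_mul, map_inv, h1, h2, mul_one, mul_inv_rev]
  rw [← map_mul, hcommute, map_mul]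
  group
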